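/- Nonemptiness and basic properties of the strict convex dual (parts (i) and (ii) of the paper's Proposition on convex cones): Let V be a finite-dimensional real inner product space and C ⊆ V a convex cone. Then the strict convex dual C^⊛ is an open convex cone, and C^⊛ is nonempty if and only if C contains no affine line. -/

import Mathlib

open scoped RealInnerProductSpace

/-- The strict convex dual of a subset `C` of a real inner product space:
all vectors pairing strictly positively with every nonzero element of `closure C`. -/
def strictDual {V : Type*} [NormedAddCommGroup V] [InnerProductSpace ℝ V]
    (C : Set V) : Set V :=
  {u : V | ∀ v ∈ closure C, v ≠ 0 → 0 < ⟪u, v⟫}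

section Aux

variable {V : Type*} [NormedAddCommGroup V] [InnerProductSpace ℝ V] [FiniteDimensional ℝ V]

/-- The closure of a cone is closed under positive scaling. -/
lemma aux_closure_cone {C : Set V} (hcone : ∀ c ∈ C, ∀ t : ℝ, 0 < t → t • c ∈ C)
    {v : V} (hv : v ∈ closure C) {t : ℝ} (ht : 0 < t) : t • v ∈ closure C := by
  have h1 : (t • ·) '' closure C ⊆ closure ((t • ·) '' C) :=
    image_closure_subset_closure_image (continuous_const_smul t)
  have h2 : closure ((t • ·) '' C) ⊆ closure C := by
    apply closure_mono
    rintro x ⟨c, hc, rfl⟩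
    exact hcone c hc t ht
  exact h2 (h1 ⟨v, hv, rfl⟩)

lemma aux_open {C : Set V} (hcone : ∀ c ∈ C, ∀ t : ℝ, 0 < t → t • c ∈ C) :
    IsOpen (strictDual C) := by
  rw [Metric.isOpen_iff]
  intro u hu
  set K : Set V := Metric.sphere (0 : V) 1 ∩ closure C with hK
  have hmemK : ∀ v ∈ closure C, v ≠ 0 → ‖v‖⁻¹ • v ∈ K := by
    intro v hv hv0
    refine ⟨?_, aux_closure_cone hcone hv (inv_pos.mpr (norm_pos_iff.mpr hv0))⟩
    simp [norm_smul, abs_of_nonneg (norm_nonneg v),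
      inv_mul_cancel₀ (norm_ne_zero_iff.mpr hv0)]
  have hball : ∀ ε > 0, (∀ w ∈ K, ε ≤ ⟪u, w⟫) → Metric.ball u ε ⊆ strictDual C := by
    intro ε hε hmin u' hu' v hv hv0
    have hw : ‖v‖⁻¹ • v ∈ K := hmemK v hv hv0
    have h1 : ε ≤ ⟪u, ‖v‖⁻¹ • v⟫ := hmin _ hw
    have hnw : ‖(‖v‖⁻¹ • v)‖ = 1 := mem_sphere_zero_iff_norm.mp hw.1
    have h2 : ⟪u - u', ‖v‖⁻¹ • v⟫ ≤ ‖u - u'‖ := by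
      calc ⟪u - u', ‖v‖⁻¹ • v⟫ ≤ ‖u - u'‖ * ‖(‖v‖⁻¹ • v)‖ := real_inner_le_norm _ _
        _ = ‖u - u'‖ := by rw [hnw, mul_one]
    have h3 : ‖u - u'‖ < ε := by
      rw [Metric.mem_ball, dist_comm] at hu'; rwa [← dist_eq_norm]
    have h4 : 0 < ⟪u', ‖v‖⁻¹ • v⟫ := by
      have hsub : ⟪u - u', ‖v‖⁻¹ • v⟫ = ⟪u, ‖v‖⁻¹ • v⟫ - ⟪u', ‖v‖⁻¹ • v⟫ :=
        inner_sub_left _ _ _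
      linarith
    have hveq : v = ‖v‖ • (‖v‖⁻¹ • v) := by
      rw [smul_smul, mul_inv_cancel₀ (norm_ne_zero_iff.mpr hv0), one_smul]
    calc (0:ℝ) < ‖v‖ * ⟪u', ‖v‖⁻¹ • v⟫ := mul_pos (norm_pos_iff.mpr hv0) h4
      _ = ⟪u', v⟫ := by rw [← real_inner_smul_right, ← hveq]
  rcases K.eq_empty_or_nonempty with hKe | hKne
  · refine ⟨1, one_pos, hball 1 one_pos ?_⟩
    intro w hw; rw [hKe] at hw; exact absurd hw (Set.notMem_empty w)
  · have hKc : IsCompact K := (isCompact_sphere (0:V) 1).inter_right isClosed_closure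
    have hcont : Continuous fun w : V => ⟪u, w⟫ := Continuous.inner continuous_const continuous_id
    obtain ⟨w₀, hw₀K, hmin⟩ := hKc.exists_isMinOn hKne hcont.continuousOn
    have hw₀0 : w₀ ≠ 0 := by
      intro h
      have := hw₀K.1
      rw [h, Metric.mem_sphere, dist_self] at this
      norm_num at this
    have hε : 0 < ⟪u, w₀⟫ := hu w₀ hw₀K.2 hw₀0
    exact ⟨_, hε, hball _ hε fun w hw => hmin hw⟩

end Aux

section Aux2

variable {V : Type*} [NormedAddCommGroup V] [InnerProductSpace ℝ V] [FiniteDimensional ℝ V]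

/-- If the closure of the convex cone `C` contains `v` and `-v` with `v ≠ 0`, then `C`
contains an affine line. -/
lemma aux_line {C : Set V} (hconv : Convex ℝ C)
    (hcone : ∀ c ∈ C, ∀ t : ℝ, 0 < t → t • c ∈ C)
    {v : V} (hv : v ∈ closure C) (hv' : -v ∈ closure C) (hv0 : v ≠ 0) :
    ∃ a b : V, b ≠ 0 ∧ ∀ t : ℝ, a + t • b ∈ C := by
  have hCne : C.Nonempty := by rw [← closure_nonempty_iff]; exact ⟨v, hv⟩
  set W : Submodule ℝ V := Submodule.span ℝ C with hW
  have hCW : C ⊆ (W : Set V) := Submodule.subset_span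
  have hWclosed : IsClosed (W : Set V) := Submodule.closed_of_finiteDimensional W
  have hclW : closure C ⊆ (W : Set V) := closure_minimal hCW hWclosed
  set C' : Set W := (Subtype.val) ⁻¹' C with hC'
  have himg : (Subtype.val : W → V) '' C' = C :=
    Set.image_preimage_eq_of_subset (by rwa [Subtype.range_coe])
  have hC'conv : Convex ℝ C' := hconv.linear_preimage W.subtype
  have hspan' : Submodule.span ℝ C' = ⊤ := by
    apply Submodule.map_injective_of_injective W.injective_subtype
    rw [Submodule.map_span, Submodule.map_top, Submodule.range_subtype]
    rw [show (W.subtype : W → V) '' C' = C from himg]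
  obtain ⟨c, hc⟩ := hCne
  have hc' : (⟨c, hCW hc⟩ : W) ∈ C' := hc
  have haff : affineSpan ℝ C' = ⊤ := by
    rw [eq_top_iff]; intro x _
    have hdir : vectorSpan ℝ C' = ⊤ := by
      rw [eq_top_iff, ← hspan', Submodule.span_le]
      intro y hy
      have h2y : ((2:ℝ) • y) ∈ C' := by
        have := hcone _ hy 2 (by norm_num)
        simpa [hC'] using this
      have hmem : (2:ℝ) • y -ᵥ y ∈ vectorSpan ℝ C' := vsub_mem_vectorSpan ℝ h2y hy
      have heq : (2:ℝ) • y -ᵥ y = y := by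
        rw [vsub_eq_sub, two_smul]; abel
      rwa [heq] at hmem
    have hcaff : (⟨c, hCW hc⟩ : W) ∈ affineSpan ℝ C' := mem_affineSpan ℝ hc'
    have hxd : x - ⟨c, hCW hc⟩ ∈ (affineSpan ℝ C').direction := by
      rw [direction_affineSpan, hdir]; trivial
    have := AffineSubspace.vadd_mem_of_mem_direction hxd hcaff
    simpa using this
  obtain ⟨c₀, hc₀⟩ := (hC'conv.interior_nonempty_iff_affineSpan_eq_top).mpr haff
  have key : ∀ w : V, w ∈ closure C → (c₀ : V) + w ∈ C := by
    intro w hw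
    have hwW : w ∈ W := hclW hw
    have hwcl : (⟨w, hwW⟩ : W) ∈ closure C' := by
      rw [closure_subtype]
      show w ∈ closure ((Subtype.val : W → V) '' C')
      rw [himg]; exact hw
    have hmid := hC'conv.combo_interior_closure_mem_interior hc₀ hwcl
      (by norm_num : (0:ℝ) < 1/2) (by norm_num : (0:ℝ) ≤ 1/2) (by norm_num)
    have hmid' : ((1/2:ℝ) • c₀ + (1/2:ℝ) • (⟨w,hwW⟩:W) : W) ∈ C' := interior_subset hmid
    have hmidC : (((1/2:ℝ) • c₀ + (1/2:ℝ) • (⟨w,hwW⟩:W) : W) : V) ∈ C := hmid'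
    have h2 := hcone _ hmidC 2 (by norm_num)
    have heq : (2:ℝ) • ((((1/2:ℝ) • c₀ + (1/2:ℝ) • (⟨w,hwW⟩:W) : W) : V)) = (c₀:V) + w := by
      push_cast
      rw [smul_add, smul_smul, smul_smul]
      norm_num
    rwa [heq] at h2
  refine ⟨(c₀ : V), v, hv0, ?_⟩
  intro t
  rcases lt_trichotomy t 0 with ht | ht | ht
  · have : t • v = (-t) • (-v) := by rw [smul_neg, neg_smul, neg_neg]
    rw [this]
    exact key _ (aux_closure_cone hcone hv' (neg_pos.mpr ht))
  · have hc₀' : c₀ ∈ C' := interior_subset hc₀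
    have hc₀C : (c₀ : V) ∈ C := hc₀'
    simpa [ht] using hc₀C
  · exact key _ (aux_closure_cone hcone hv ht)

/-- A salient closed convex cone admits a strictly positive functional. -/
lemma aux_salient {C : Set V} (hconv : Convex ℝ C)
    (hcone : ∀ c ∈ C, ∀ t : ℝ, 0 < t → t • c ∈ C)
    (hsal : ∀ v ∈ closure C, -v ∈ closure C → v = 0) :
    (strictDual C).Nonempty := by
  have hDconvC : Convex ℝ (closure C) := hconv.closure
  -- the closed convex cone `closure C ∪ {0}`
  set K : ConvexCone ℝ V :=
    { carrier := closure C ∪ {0}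
      smul_mem' := by
        rintro c hc x (hx | hx)
        · exact Or.inl (aux_closure_cone hcone hx hc)
        · rw [Set.mem_singleton_iff] at hx
          exact Or.inr (by rw [hx, smul_zero]; rfl)
      add_mem' := by
        rintro x (hx | hx) y (hy | hy)
        · left
          have hm : (1/2 : ℝ) • x + (1/2 : ℝ) • y ∈ closure C :=
            hDconvC hx hy (by norm_num) (by norm_num) (by norm_num)
          have h2 := aux_closure_cone hcone hm (by norm_num : (0:ℝ) < 2)
          have : (2:ℝ) • ((1/2 : ℝ) • x + (1/2 : ℝ) • y) = x + y := by
            rw [smul_add, smul_smul, smul_smul]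
            norm_num
          rwa [this] at h2
        · rw [Set.mem_singleton_iff] at hy
          rw [hy, add_zero]; exact Or.inl hx
        · rw [Set.mem_singleton_iff] at hx
          rw [hx, zero_add]; exact Or.inl hy
        · rw [Set.mem_singleton_iff] at hx hy
          rw [hx, hy, add_zero]; exact Or.inr rfl } with hKdef
  have hK : (K : Set V) = closure C ∪ {0} := rfl
  have hKne : (K : Set V).Nonempty := ⟨0, Or.inr rfl⟩
  have hKcl : IsClosed (K : Set V) := by
    rw [hK]; exact isClosed_closure.union isClosed_singleton
  have hbip : (ProperCone.innerDual (ProperCone.innerDual (K : Set V) : Set V) : Set V)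
      = (K : Set V) := by
    let P : ProperCone ℝ V := ⟨K.toPointedCone (show (0:V) ∈ K from Or.inr rfl), hKcl⟩
    have hP : (P : Set V) = K := rfl
    rw [← hP, ProperCone.innerDual_innerDual]
  set Q : Set V := (ProperCone.innerDual (K : Set V) : Set V) with hQdef
  have hQconv : Convex ℝ Q := by
    intro x hx y hy a b ha hb _ z hz
    have h1 : 0 ≤ ⟪z, x⟫ := ProperCone.mem_innerDual.mp hx hz
    have h2 : 0 ≤ ⟪z, y⟫ := ProperCone.mem_innerDual.mp hy hz
    show 0 ≤ ⟪z, a • x + b • y⟫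
    rw [inner_add_right, real_inner_smul_right, real_inner_smul_right]
    nlinarith [mul_nonneg ha h1, mul_nonneg hb h2]
  have h0Q : (0:V) ∈ Q := ProperCone.mem_innerDual.mpr (fun x _ => by simp)
  -- the linear span of the dual cone is everything
  have hspan : Submodule.span ℝ Q = ⊤ := by
    by_contra hne
    obtain ⟨w, hwmem, hw0⟩ : ∃ w, w ∈ (Submodule.span ℝ Q)ᗮ ∧ w ≠ 0 :=
      Submodule.exists_mem_ne_zero_of_ne_bot
        (by rwa [Ne, Submodule.orthogonal_eq_bot_iff])
    have hwQ : ∀ x ∈ Q, ⟪x, w⟫ = 0 := fun x hx =>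
      (Submodule.mem_orthogonal _ w).mp hwmem x (Submodule.subset_span hx)
    have hwd : w ∈ (ProperCone.innerDual Q : Set V) := ProperCone.mem_innerDual.mpr
      (fun x hx => le_of_eq (hwQ x hx).symm)
    have hwd' : -w ∈ (ProperCone.innerDual Q : Set V) := ProperCone.mem_innerDual.mpr
      (fun x hx => by rw [inner_neg_right, hwQ x hx, neg_zero])
    rw [hbip] at hwd hwd'
    have hwd2 : w ∈ (K : Set V) := hwd
    have hwd2' : -w ∈ (K : Set V) := hwd'
    rw [hK] at hwd2 hwd2'
    have hw1 : w ∈ closure C := by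
      rcases hwd2 with h | h
      · exact h
      · exact absurd h hw0
    have hw2 : -w ∈ closure C := by
      rcases hwd2' with h | h
      · exact h
      · exact absurd (neg_eq_zero.mp h) hw0
    exact hw0 (hsal w hw1 hw2)
  -- hence its affine span is everything, so it has interior points
  have haff : affineSpan ℝ Q = ⊤ := by
    rw [eq_top_iff]
    intro x _
    have hdir : vectorSpan ℝ Q = ⊤ := by
      rw [eq_top_iff, ← hspan]
      rw [Submodule.span_le]
      intro y hy
      have : y -ᵥ (0:V) ∈ vectorSpan ℝ Q := vsub_mem_vectorSpan ℝ hy h0Q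
      simpa using this
    have h0aff : (0:V) ∈ affineSpan ℝ Q := mem_affineSpan ℝ h0Q
    have : (x : V) ∈ (affineSpan ℝ Q).direction := by
      rw [direction_affineSpan, hdir]; trivial
    have := AffineSubspace.vadd_mem_of_mem_direction this h0aff
    simpa using this
  obtain ⟨u, hu⟩ := (hQconv.interior_nonempty_iff_affineSpan_eq_top).mpr haff
  refine ⟨u, ?_⟩
  intro v hv hv0
  have hnv : (0:ℝ) < ‖v‖ := norm_pos_iff.mpr hv0
  obtain ⟨ε, hε, hball⟩ := Metric.isOpen_iff.mp isOpen_interior u hu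
  set δ : ℝ := ε / (2 * ‖v‖) with hδ
  have hδpos : 0 < δ := by positivity
  have hu' : u - δ • v ∈ Q := by
    apply interior_subset
    apply hball
    rw [Metric.mem_ball, dist_eq_norm]
    have : u - δ • v - u = -(δ • v) := by abel
    rw [this, norm_neg, norm_smul, Real.norm_eq_abs, abs_of_pos hδpos, hδ]
    rw [div_mul_eq_mul_div, mul_comm]
    rw [div_lt_iff₀ (by positivity)]
    nlinarith
  have hvK : v ∈ (K : Set V) := by rw [hK]; exact Or.inl hv
  have h1 : 0 ≤ ⟪v, u - δ • v⟫ := ProperCone.mem_innerDual.mp hu' hvK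
  rw [inner_sub_right, real_inner_smul_right, real_inner_self_eq_norm_sq] at h1
  have : 0 < ⟪v, u⟫ := by nlinarith [mul_pos hδpos (pow_pos hnv 2)]
  rwa [real_inner_comm]

end Aux2

/-- Basic properties of the strict convex dual of a convex cone `C` in a
finite-dimensional real inner product space: `C^⊛` is an open convex cone, and it is
nonempty if and only if `C` contains no affine line. -/
theorem statement17 {V : Type*} [NormedAddCommGroup V] [InnerProductSpace ℝ V]
    [FiniteDimensional ℝ V]
    (C : Set V) (hconv : Convex ℝ C)
    (hcone : ∀ c ∈ C, ∀ t : ℝ, 0 < t → t • c ∈ C) :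
    IsOpen (strictDual C) ∧
    Convex ℝ (strictDual C) ∧
    (∀ u ∈ strictDual C, ∀ t : ℝ, 0 < t → t • u ∈ strictDual C) ∧
    ((strictDual C).Nonempty ↔ ¬ ∃ a b : V, b ≠ 0 ∧ ∀ t : ℝ, a + t • b ∈ C) := by
  refine ⟨aux_open hcone, ?_, ?_, ?_, ?_⟩
  · -- convexity
    intro u₁ h₁ u₂ h₂ a b ha hb hab
    intro v hv hv0
    have hx := h₁ v hv hv0
    have hy := h₂ v hv hv0
    have : ⟪a • u₁ + b • u₂, v⟫ = a * ⟪u₁, v⟫ + b * ⟪u₂, v⟫ := by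
      rw [inner_add_left, real_inner_smul_left, real_inner_smul_left]
    rw [this]
    rcases eq_or_lt_of_le ha with h | h
    · have : b = 1 := by linarith
      nlinarith
    · nlinarith [mul_nonneg hb hy.le]
  · -- cone
    intro u hu t ht v hv hv0
    rw [real_inner_smul_left]
    exact mul_pos ht (hu v hv hv0)
  · -- nonempty → no line
    rintro ⟨u, hu⟩ ⟨a, b, hb0, hline⟩
    have hbmem : b ∈ closure C := by
      apply mem_closure_of_tendsto (f := fun n : ℕ => (n : ℝ)⁻¹ • a + b)
        (b := Filter.atTop)
      · have : Filter.Tendsto (fun n : ℕ => (n : ℝ)⁻¹ • a) Filter.atTop (nhds 0) := by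
          simpa using ((tendsto_inv_atTop_nhds_zero_nat (𝕜 := ℝ)).smul_const a)
        simpa using this.add_const b
      · filter_upwards [Filter.eventually_ge_atTop 1] with n hn
        have hnpos : (0:ℝ) < n := by exact_mod_cast hn
        have := hcone _ (hline n) ((n:ℝ)⁻¹) (by positivity)
        have heq : (n:ℝ)⁻¹ • (a + (n:ℝ) • b) = (n:ℝ)⁻¹ • a + b := by
          rw [smul_add, smul_smul, inv_mul_cancel₀ hnpos.ne', one_smul]
        rw [heq] at this
        exact this
    have hbmem' : -b ∈ closure C := by
      apply mem_closure_of_tendsto (f := fun n : ℕ => (n : ℝ)⁻¹ • a + -b)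
        (b := Filter.atTop)
      · have : Filter.Tendsto (fun n : ℕ => (n : ℝ)⁻¹ • a) Filter.atTop (nhds 0) := by
          simpa using ((tendsto_inv_atTop_nhds_zero_nat (𝕜 := ℝ)).smul_const a)
        simpa using this.add_const (-b)
      · filter_upwards [Filter.eventually_ge_atTop 1] with n hn
        have hnpos : (0:ℝ) < n := by exact_mod_cast hn
        have := hcone _ (hline (-(n:ℝ))) ((n:ℝ)⁻¹) (by positivity)
        have heq : (n:ℝ)⁻¹ • (a + (-(n:ℝ)) • b) = (n:ℝ)⁻¹ • a + -b := by
          rw [smul_add, smul_smul]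
          rw [show (n:ℝ)⁻¹ * (-(n:ℝ)) = -1 by field_simp]
          simp
        rw [heq] at this
        exact this
    have h1 := hu b hbmem hb0
    have h2 := hu (-b) hbmem' (neg_ne_zero.mpr hb0)
    rw [inner_neg_right] at h2
    linarith
  · -- no line → nonempty
    intro h
    apply aux_salient hconv hcone
    intro v hv hv'
    by_contra hv0
    exact h (aux_line hconv hcone hv hv' hv0)
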